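/- Let M be a set, η : ℝ → (M ≃ M) a family of bijections of M, and f : ℝ → M → ℝ a family of real-valued functions. For p ∈ M set F_p(t) = f_t(η_t⁻¹(p)). Assume there is a constant C < 1 such that |F_p(t) − F_p(s)| ≤ C·|t − s| for all p ∈ M and t, s ∈ ℝ, that each F_p is continuous, and that each F_p is bounded. Then for every l ∈ [0,1], the linear interpolation Φ_l : M × ℝ → M × ℝ defined by Φ_l(x,t) = (η_t(x), t − l·f_t(x)) is a bijection. -/

import Mathlib

/-- Let `M` be a set, `η : ℝ → (M ≃ M)` a family of bijections and
`f : ℝ → M → ℝ` a family of functions. For `p ∈ M` set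
`F p t = f t (η t⁻¹ p)`. If there is a constant `C < 1` with
`|F p t − F p s| ≤ C |t − s|` for all `p, t, s`, each `F p` is continuous and
each `F p` is bounded, then for every `l ∈ [0,1]` the linear interpolation
`Φ_l (x,t) = (η t x, t − l · f t x)` is a bijection of `M × ℝ`. -/
theorem statement11 {M : Type*} (η : ℝ → M ≃ M) (f : ℝ → M → ℝ) (F : M → ℝ → ℝ)
    (hF : ∀ (p : M) (t : ℝ), F p t = f t ((η t).symm p))
    (C : ℝ) (hC : C < 1)
    (hLip : ∀ (p : M) (t s : ℝ), |F p t - F p s| ≤ C * |t - s|)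
    (hcont : ∀ p : M, Continuous (F p))
    (hbdd : ∀ p : M, ∃ B : ℝ, ∀ t : ℝ, |F p t| ≤ B) :
    ∀ l ∈ Set.Icc (0 : ℝ) 1,
      Function.Bijective
        (fun q : M × ℝ => ((η q.2 q.1, q.2 - l * f q.2 q.1) : M × ℝ)) := by
  intro l hl
  obtain ⟨hl0, hl1⟩ := hl
  have hmono : ∀ p : M, StrictMono (fun u : ℝ => u - l * F p u) := by
    intro p
    have hC0 : 0 ≤ C := by
      have h := hLip p 0 1
      have h0 : |(0 : ℝ) - 1| = 1 := by norm_num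
      rw [h0, mul_one] at h
      exact le_trans (abs_nonneg _) h
    intro a b hab
    have h1 := hLip p b a
    have h2 : |F p b - F p a| ≤ C * (b - a) := by
      rwa [abs_of_pos (by linarith : (0:ℝ) < b - a)] at h1
    obtain ⟨hle1, hle2⟩ := abs_le.mp h2
    simp only
    nlinarith
  constructor
  · rintro ⟨x, t⟩ ⟨x', t'⟩ h
    simp only [Prod.mk.injEq] at h
    obtain ⟨h1, h2⟩ := h
    set p := η t x with hp
    have hx : x = (η t).symm p := by simp [hp]
    have hx' : x' = (η t').symm p := by rw [h1]; simp
    have hft : f t x = F p t := by rw [hF, ← hx]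
    have hft' : f t' x' = F p t' := by rw [hF, ← hx']
    rw [hft, hft'] at h2
    have htt : t = t' := (hmono p).injective h2
    subst htt
    have : x = x' := by rw [hx, hx']
    simp [this]
  · rintro ⟨p, s⟩
    obtain ⟨B, hB⟩ := hbdd p
    have hg : Continuous (fun u : ℝ => u - l * F p u) :=
      continuous_id.sub (continuous_const.mul (hcont p))
    have htop : Filter.Tendsto (fun u : ℝ => u - l * F p u) Filter.atTop Filter.atTop := by
      apply Filter.tendsto_atTop_mono (f := fun u : ℝ => u - l * B)
      · intro u
        have h1 : F p u ≤ B := le_trans (le_abs_self _) (hB u)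
        nlinarith
      · exact Filter.tendsto_atTop_add_const_right _ _ Filter.tendsto_id
    have hbot : Filter.Tendsto (fun u : ℝ => u - l * F p u) Filter.atBot Filter.atBot := by
      apply Filter.tendsto_atBot_mono (f := fun u : ℝ => u + l * B)
      · intro u
        have h1 : -B ≤ F p u := neg_le_of_abs_le (hB u)
        nlinarith
      · exact Filter.tendsto_atBot_add_const_right _ _ Filter.tendsto_id
    obtain ⟨t, ht⟩ := hg.surjective htop hbot s
    refine ⟨⟨(η t).symm p, t⟩, ?_⟩
    simp only [Equiv.apply_symm_apply, ← hF]
    exact congrArg (Prod.mk p) ht
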